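/- Let M be a matroid with injective weights and unique optimal basis OPT. For e ∈ OPT, the gap Δ_e = OPT(M) − OPT(M|(S\{e})) equals max{w ∈ ℝ : (S \ {e})^{> μ(e) − w} does not block e}. -/

import Mathlib

open Matroid Set

variable {α : Type*}

/-- The `ℕ∞`-valued rank of a set `X` in a matroid `M`:
the supremum of the sizes of independent subsets of `X`. -/
noncomputable def Matroid.eRank' (M : Matroid α) (X : Set α) : ℕ∞ :=
  ⨆ I ∈ {I | M.Indep I ∧ I ⊆ X}, I.encard

/-- A set `A` *blocks* an element `e` if adding `e` to `A` does not increase the rank. -/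
def Matroid.Blocks (M : Matroid α) (A : Set α) (e : α) : Prop :=
  M.eRank' (insert e A) = M.eRank' A

/-- The total weight of a set of elements. -/
noncomputable def wt (μ : α → ℝ) (I : Set α) : ℝ := ∑ᶠ e ∈ I, μ e

/-- `I` is a maximum-weight base of `M` with respect to the weight function `μ`. -/
def IsMaxWeightBase (M : Matroid α) (μ : α → ℝ) (I : Set α) : Prop :=
  M.IsBase I ∧ ∀ J, M.IsBase J → wt μ J ≤ wt μ I

/-- The modified cost function `μ_{I,ε}` adding `ε` to the weight of each element of `I`. -/
noncomputable def modCost (μ : α → ℝ) (I : Set α) (ε : ℝ) : α → ℝ :=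
  fun e => μ e + I.indicator (fun _ => ε) e

/-- `I` is an `ε`-optimal base of `M` w.r.t. `μ`:
it is a maximum-weight base for the modified cost `μ_{I,ε}`. -/
def EpsOptimal (M : Matroid α) (μ : α → ℝ) (ε : ℝ) (I : Set α) : Prop :=
  IsMaxWeightBase M (modCost μ I ε) I

/-- Contraction of a matroid, defined by duality: `M ／ C = (M✶ ↾ (M.E \ C))✶`. -/
noncomputable def Matroid.contract' (M : Matroid α) (C : Set α) : Matroid α :=
  (M✶ ↾ (M.E \ C))✶

/-- The weight of a maximum-weight base of `M` with respect to `μ`. -/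
noncomputable def OPTval (M : Matroid α) (μ : α → ℝ) : ℝ :=
  sSup ((fun B => wt μ B) '' {B | M.IsBase B})

section Aux

variable {α : Type*}

lemma wt_insert (μ : α → ℝ) {a : α} {s : Set α} (h : a ∉ s) (hs : s.Finite) :
    wt μ (insert a s) = μ a + wt μ s :=
  finsum_mem_insert μ h hs

lemma wt_remove (μ : α → ℝ) {a : α} {s : Set α} (h : a ∈ s) (hs : s.Finite) :
    wt μ (s \ {a}) = wt μ s - μ a := by
  have h1 : wt μ (insert a (s \ {a})) = μ a + wt μ (s \ {a}) :=
    wt_insert μ (fun hx => hx.2 rfl) (hs.diff)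
  rw [insert_diff_singleton, insert_eq_of_mem h] at h1
  linarith

lemma eRank'_eq_encard_of_basis {M : Matroid α} {I X : Set α} (hIX : M.IsBasis I X) :
    M.eRank' X = I.encard := by
  refine le_antisymm (iSup₂_le fun J hJ => ?_) ?_
  · obtain ⟨hJind, hJX⟩ := hJ
    obtain ⟨J', hJ', hJJ'⟩ := hJind.subset_isBasis_of_subset hJX hIX.subset_ground
    exact (Set.encard_mono hJJ').trans (hJ'.encard_eq_encard hIX).le
  · exact le_iSup₂ (f := fun (I : Set α) (_ : I ∈ {I | M.Indep I ∧ I ⊆ X}) => I.encard) I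
      ⟨hIX.indep, hIX.subset⟩

lemma blocks_iff_mem_closure (M : Matroid α) [M.Finite] {A : Set α} {e : α}
    (hA : A ⊆ M.E) (he : e ∈ M.E) : M.Blocks A e ↔ e ∈ M.closure A := by
  obtain ⟨I, hI⟩ := M.exists_isBasis A hA
  have hclA : M.closure I = M.closure A := hI.closure_eq_closure
  have hIfin : I.Finite := M.ground_finite.subset hI.indep.subset_ground
  constructor
  · intro hblocks
    by_contra hecl
    have heI : e ∉ I := fun h => hecl (M.mem_closure_of_mem (hI.subset h) hA)
    have hins : M.Indep (insert e I) := by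
      rw [hI.indep.insert_indep_iff_of_notMem heI]
      exact ⟨he, fun h => hecl (hclA ▸ h)⟩
    have hbasis2 : M.IsBasis (insert e I) (insert e A) := hI.insert_isBasis_insert hins
    have h1 : M.eRank' (insert e A) = I.encard + 1 := by
      rw [eRank'_eq_encard_of_basis hbasis2, Set.encard_insert_of_notMem heI]
    have h2 : M.eRank' A = I.encard := eRank'_eq_encard_of_basis hI
    rw [Matroid.Blocks, h1, h2] at hblocks
    have := (ENat.add_one_le_iff hIfin.encard_lt_top.ne).mp hblocks.le
    exact this.false
  · intro hecl
    have hbasis2 : M.IsBasis I (insert e A) :=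
      hI.isBasis_closure_right.isBasis_subset (hI.subset.trans (Set.subset_insert _ _))
        (Set.insert_subset hecl (M.subset_closure A hA))
    rw [Matroid.Blocks, eRank'_eq_encard_of_basis hbasis2, eRank'_eq_encard_of_basis hI]

end Aux

/-- For a non-isolated element `e` of the unique optimal base, the gap
`Δ_e = OPT(M) − OPT(M|(S∖{e}))` equals
`max { w : (S ∖ {e})^{> μ e − w} does not block e }`. -/
theorem gap_eq_max_opt (M : Matroid α) [M.Finite] (μ : α → ℝ)
    (hinj : Set.InjOn μ M.E) (hpos : ∀ e ∈ M.E, 0 < μ e)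
    (OPT : Set α) (hOPT : IsMaxWeightBase M μ OPT)
    (hOPTuniq : ∀ B, IsMaxWeightBase M μ B → B = OPT)
    (e : α) (he : e ∈ OPT) (hniso : ¬ ∀ B, M.IsBase B → e ∈ B) :
    IsGreatest {w : ℝ | ¬ M.Blocks {x ∈ M.E \ {e} | μ e - w < μ x} e}
      (OPTval M μ - OPTval (M ↾ (M.E \ {e})) μ) := by
  classical
  have hEfin : M.E.Finite := M.ground_finite
  have hOPTbase : M.IsBase OPT := hOPT.1
  have heE : e ∈ M.E := hOPTbase.subset_ground he
  have hOPTfin : OPT.Finite := hEfin.subset hOPTbase.subset_ground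
  push_neg at hniso
  obtain ⟨B0, hB0, heB0⟩ := hniso
  set X : Set α := M.E \ {e} with hX
  have hXE : X ⊆ M.E := Set.diff_subset
  -- characterization of restriction bases
  have hrb : ∀ B, (M ↾ X).IsBase B ↔ (M.IsBase B ∧ e ∉ B) := by
    intro B
    rw [Matroid.isBase_restrict_iff hXE]
    constructor
    · intro h
      have hBX : B ⊆ X := h.subset
      refine ⟨h.isBase_of_isBase_subset hB0 ?_, fun heB => (hBX heB).2 rfl⟩
      exact Set.subset_diff_singleton hB0.subset_ground heB0
    · rintro ⟨hB, heB⟩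
      exact hB.isBasis_of_subset hXE (Set.subset_diff_singleton hB.subset_ground heB)
  -- optimal base of the restriction
  have hBfin : {B | (M ↾ X).IsBase B}.Finite :=
    hEfin.finite_subsets.subset (fun B hB => ((hrb B).1 hB).1.subset_ground)
  have hBne : {B | (M ↾ X).IsBase B}.Nonempty := ⟨B0, (hrb B0).2 ⟨hB0, heB0⟩⟩
  obtain ⟨B', hB'base, hB'max⟩ := Set.exists_max_image _ (wt μ) hBfin hBne
  obtain ⟨hB'M, heB'⟩ := (hrb B').1 hB'base
  have hB'fin : B'.Finite := hEfin.subset hB'M.subset_ground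
  have hB'X : B' ⊆ X := Set.subset_diff_singleton hB'M.subset_ground heB'
  -- values of OPTval
  have hv1 : OPTval M μ = wt μ OPT := by
    refine IsGreatest.csSup_eq ⟨⟨OPT, hOPTbase, rfl⟩, ?_⟩
    rintro _ ⟨B, hB, rfl⟩; exact hOPT.2 B hB
  have hv2 : OPTval (M ↾ X) μ = wt μ B' := by
    refine IsGreatest.csSup_eq ⟨⟨B', hB'base, rfl⟩, ?_⟩
    rintro _ ⟨B, hB, rfl⟩; exact hB'max B hB
  rw [hv1, hv2]
  set Δ : ℝ := wt μ OPT - wt μ B' with hΔ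
  constructor
  · -- Δ is in the set
    show ¬ M.Blocks {x ∈ M.E \ {e} | μ e - Δ < μ x} e
    set A : Set α := {x ∈ M.E \ {e} | μ e - Δ < μ x} with hA
    have hAE : A ⊆ M.E := fun x hx => hx.1.1
    rw [blocks_iff_mem_closure M hAE heE]
    intro hcl
    have hInd : M.Indep (OPT \ {e}) := hOPTbase.indep.subset Set.diff_subset
    have hecl : e ∉ M.closure (OPT \ {e}) := by
      rw [hInd.notMem_closure_iff_of_notMem (fun h => h.2 rfl) heE,
        Set.insert_diff_singleton, Set.insert_eq_of_mem he]
      exact hOPTbase.indep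
    have hAnsub : ¬ A ⊆ M.closure (OPT \ {e}) := fun hsub =>
      hecl (Matroid.closure_subset_closure_of_subset_closure hsub hcl)
    obtain ⟨g, hgA, hgcl⟩ := Set.not_subset.mp hAnsub
    have hgE : g ∈ M.E := hgA.1.1
    have hgne : g ≠ e := fun h => hgA.1.2 h
    have hgOPT : g ∉ OPT \ {e} := fun h =>
      hgcl (M.mem_closure_of_mem h hInd.subset_ground)
    have hins : M.Indep (insert g (OPT \ {e})) := by
      rw [hInd.insert_indep_iff_of_notMem hgOPT]; exact ⟨hgE, hgcl⟩
    have hbase2 : M.IsBase (insert g (OPT \ {e})) := by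
      have := hOPTbase.exchange_isBase_of_indep' he (fun hgO => hgOPT ⟨hgO, hgne⟩)
      rw [← Set.insert_diff_singleton_comm hgne] at this
      exact this hins
    have hebase2 : e ∉ insert g (OPT \ {e}) := by
      rintro (h | h)
      · exact hgne h.symm
      · exact h.2 rfl
    have hle : wt μ (insert g (OPT \ {e})) ≤ wt μ B' :=
      hB'max _ ((hrb _).2 ⟨hbase2, hebase2⟩)
    rw [wt_insert μ hgOPT (hOPTfin.diff), wt_remove μ he hOPTfin] at hle
    have := hgA.2
    linarith
  · -- Δ is an upper bound
    rintro w hw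
    by_contra hlt
    push_neg at hlt
    apply hw
    set Aw : Set α := {x ∈ M.E \ {e} | μ e - w < μ x} with hAw
    have hAwE : Aw ⊆ M.E := fun x hx => hx.1.1
    rw [blocks_iff_mem_closure M hAwE heE]
    set H : Set α := {x ∈ B' | μ e - w < μ x} with hH
    have hHB' : H ⊆ B' := fun x hx => hx.1
    have hHAw : H ⊆ Aw := fun x hx => ⟨hB'X (hHB' hx), hx.2⟩
    suffices hecH : e ∈ M.closure H by
      exact M.closure_subset_closure hHAw hecH
    by_contra hecH
    have heH : e ∉ H := fun h => heB' (hHB' h)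
    have hHind : M.Indep H := hB'M.indep.subset hHB'
    have hins : M.Indep (insert e H) := by
      rw [hHind.insert_indep_iff_of_notMem heH]; exact ⟨heE, hecH⟩
    obtain ⟨B'', hB''basis, hsubB''⟩ := hins.subset_isBasis_of_subset
      (Set.insert_subset_insert hHB')
      (Set.insert_subset heE hB'M.subset_ground)
    have hB''base : M.IsBase B'' := hB''basis.isBase_of_isBase_subset hB'M (Set.subset_insert e B')
    have heB'' : e ∈ B'' := hsubB'' (Set.mem_insert e H)
    have hnsub : ¬ B' ⊆ B'' := fun h => heB' ((hB'M.eq_of_subset_isBase hB''base h) ▸ heB'')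
    obtain ⟨g, hgB', hgB''⟩ := Set.not_subset.mp hnsub
    have hgH : g ∉ H := fun h => hgB'' (hsubB'' (Set.mem_insert_of_mem _ h))
    have hgne : g ≠ e := fun h => heB' (h ▸ hgB')
    have hsub2 : B'' ⊆ insert e (B' \ {g}) := by
      intro x hx
      rcases hB''basis.subset hx with (rfl | hxB')
      · exact Set.mem_insert _ _
      · exact Set.mem_insert_of_mem _ ⟨hxB', fun hxg => hgB'' (hxg ▸ hx)⟩
    have hencard : (insert e (B' \ {g})).encard = B''.encard := by
      rw [Set.encard_insert_of_notMem (fun h => heB' h.1),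
        Set.encard_diff_singleton_add_one hgB', hB'M.encard_eq_encard_of_isBase hB''base]
    have hBeq : B'' = insert e (B' \ {g}) :=
      Set.Finite.eq_of_subset_of_encard_le
        (hEfin.subset hB''base.subset_ground) hsub2 hencard.le
    have hwt : wt μ B'' = μ e + (wt μ B' - μ g) := by
      rw [hBeq, wt_insert μ (fun h => heB' h.1) (hB'fin.diff), wt_remove μ hgB' hB'fin]
    have hle : wt μ B'' ≤ wt μ OPT := hOPT.2 B'' hB''base
    have hgHmem : g ∈ H := ⟨hgB', by linarith⟩
    exact hgH hgHmem
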